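/- Closed form of the recursive construction: for every i with 1 ≤ i ≤ g, one has c_i = ⌈i·f / g⌉, the cardinality of V_i equals c_i·g − i·f, and V_i is the suffix {g − (c_i·g − i·f) + 1, …, g} of G (interpreted as the empty set when c_i·g − i·f = 0). -/

import Mathlib

/-- The set of the `f` smallest elements of a finite set `S` of naturals. -/
def takeMin (S : Finset ℕ) (f : ℕ) : Finset ℕ :=
  ((S.sort (· ≤ ·)).take f).toFinset

/-- The pair `(V_i, c_i)` of Definition 1 of the paper: `V_0 = {1, …, g}`, `c_0 = 1`;
in Case I (`|V_{i-1}| ≥ f`), `F_i` is the set of the `f` smallest elements of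
`V_{i-1}`, `V_i = V_{i-1} \ F_i` and `c_i = c_{i-1}`; in Case II (`|V_{i-1}| < f`),
`H_i = {1, …, f - |V_{i-1}|}`, `V_i = {1, …, g} \ H_i` and `c_i = c_{i-1} + 1`. -/
def paperVc (g f : ℕ) : ℕ → Finset ℕ × ℕ
  | 0 => (Finset.Icc 1 g, 1)
  | (i + 1) =>
    let V := (paperVc g f i).1
    let c := (paperVc g f i).2
    if f ≤ V.card then
      (V \ takeMin V f, c)
    else
      (Finset.Icc 1 g \ Finset.Icc 1 (f - V.card), c + 1)

/-- The set `F_i` of Definition 1 of the paper (`i ≥ 1`): the `f` smallest elements of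
`V_{i-1}` in Case I, and `V_{i-1} ∪ H_i` in Case II. -/
def paperF (g f : ℕ) (i : ℕ) : Finset ℕ :=
  let V := (paperVc g f (i - 1)).1
  if f ≤ V.card then takeMin V f
  else V ∪ Finset.Icc 1 (f - V.card)

/-- `H_i` of Case II of Definition 1. -/
def paperH (g f : ℕ) (i : ℕ) : Finset ℕ :=
  Finset.Icc 1 (f - (paperVc g f (i - 1)).1.card)

lemma range'_take (a m n : ℕ) : (List.range' a n).take m = List.range' a (min m n) := by
  induction n generalizing a m with
  | zero => simp
  | succ n ih =>
    cases m with
    | zero => simp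
    | succ m => simp [List.range'_succ, ih, Nat.succ_min_succ]

lemma toFinset_range' (a n : ℕ) : (List.range' a n).toFinset = Finset.Ico a (a + n) := by
  ext x
  simp only [List.mem_toFinset, List.mem_range', Finset.mem_Ico]
  constructor
  · rintro ⟨i, hi, rfl⟩; omega
  · intro h; exact ⟨x - a, by omega, by omega⟩

lemma sort_Icc (a b : ℕ) :
    (Finset.Icc a b).sort (· ≤ ·) = List.range' a (b + 1 - a) := by
  refine List.Perm.eq_of_pairwise' (Finset.pairwise_sort _ _)
    (List.Pairwise.imp (fun h => le_of_lt h) List.pairwise_lt_range') ?_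
  apply List.perm_of_nodup_nodup_toFinset_eq (Finset.sort_nodup _ _)
    List.nodup_range'
  rw [Finset.sort_toFinset, toFinset_range']
  ext x
  simp only [Finset.mem_Icc, Finset.mem_Ico]
  omega

lemma takeMin_Icc (a b f : ℕ) (hf : f ≤ b + 1 - a) :
    takeMin (Finset.Icc a b) f = Finset.Ico a (a + f) := by
  unfold takeMin
  rw [sort_Icc, range'_take, Nat.min_eq_left hf, toFinset_range']

lemma ceil_helper (a c g : ℕ) (hg : 0 < g) (hc : 1 ≤ c) (h1 : a ≤ c * g)
    (h2 : c * g < a + g) : ⌈(a : ℚ) / (g : ℚ)⌉₊ = c := by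
  have hg0 : (0 : ℚ) < (g : ℚ) := by exact_mod_cast hg
  refine (Nat.ceil_eq_iff (by omega)).mpr ⟨?_, ?_⟩
  · rw [lt_div_iff₀ hg0]
    have e : (c - 1) * g = c * g - g := by rw [Nat.sub_mul, one_mul]
    have hcg : g ≤ c * g := Nat.le_mul_of_pos_left g hc
    have h : (c - 1) * g < a := by omega
    exact_mod_cast h
  · rw [div_le_iff₀ hg0]
    exact_mod_cast h1

lemma paperVc_invariant (g f : ℕ) (hf : 1 ≤ f) (hfg : f ≤ g) (i : ℕ) :
    i * f ≤ (paperVc g f i).2 * g ∧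
    (paperVc g f i).2 * g - i * f ≤ g ∧
    (1 ≤ i → (paperVc g f i).2 * g - i * f < g) ∧
    1 ≤ (paperVc g f i).2 ∧
    (paperVc g f i).1 =
      Finset.Icc (g - ((paperVc g f i).2 * g - i * f) + 1) g := by
  induction i with
  | zero => simp [paperVc]
  | succ i ih =>
    obtain ⟨h1, h2, h3, h4, h5⟩ := ih
    have step : paperVc g f (i + 1) =
        if f ≤ (paperVc g f i).1.card then
          ((paperVc g f i).1 \ takeMin (paperVc g f i).1 f, (paperVc g f i).2)
        else
          (Finset.Icc 1 g \ Finset.Icc 1 (f - (paperVc g f i).1.card),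
            (paperVc g f i).2 + 1) := rfl
    set c := (paperVc g f i).2 with hc
    set r := c * g - i * f with hr
    have hcard : (paperVc g f i).1.card = r := by
      rw [h5, Nat.card_Icc]; omega
    have hmul1 : (i + 1) * f = i * f + f := by ring
    have hmul2 : (c + 1) * g = c * g + g := by ring
    by_cases hcase : f ≤ (paperVc g f i).1.card
    · have hfr : f ≤ r := by rwa [hcard] at hcase
      rw [step, if_pos hcase]
      dsimp only
      have htm : takeMin (Finset.Icc (g - r + 1) g) f =
          Finset.Ico (g - r + 1) (g - r + 1 + f) :=
        takeMin_Icc _ _ _ (by omega)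
      refine ⟨by omega, by omega, by omega, h4, ?_⟩
      rw [h5, htm]
      ext x
      simp only [Finset.mem_sdiff, Finset.mem_Icc, Finset.mem_Ico]
      omega
    · have hrf : r < f := by rwa [hcard, not_le] at hcase
      rw [step, if_neg hcase]
      dsimp only
      refine ⟨by omega, by omega, by omega, by omega, ?_⟩
      rw [hcard]
      ext x
      simp only [Finset.mem_sdiff, Finset.mem_Icc]
      omega

/-- Closed form of the recursive construction: for `1 ≤ i ≤ g`, `c_i = ⌈i f / g⌉`,
`|V_i| = c_i g - i f`, and `V_i` is the suffix `{g - (c_i g - i f) + 1, …, g}` of `G`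
(empty when `c_i g - i f = 0`). -/
theorem paperVc_closed_form (g f : ℕ) (hf : 1 ≤ f) (hfg : f ≤ g) (i : ℕ)
    (hi1 : 1 ≤ i) (hig : i ≤ g) :
    (paperVc g f i).2 = ⌈(i * f : ℚ) / (g : ℚ)⌉₊ ∧
    (paperVc g f i).1.card = (paperVc g f i).2 * g - i * f ∧
    (paperVc g f i).1 =
      Finset.Icc (g - ((paperVc g f i).2 * g - i * f) + 1) g := by
  obtain ⟨h1, h2, h3, h4, h5⟩ := paperVc_invariant g f hf hfg i
  have h3' := h3 hi1
  refine ⟨?_, ?_, h5⟩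
  · have := ceil_helper (i * f) ((paperVc g f i).2) g
      (Nat.lt_of_lt_of_le hf hfg) h4 h1 (by omega)
    rw [← this]
    norm_num
  · rw [h5, Nat.card_Icc]; omega
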